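/- arXiv:2510.01726 — 2 statements merged into one kernel-verified Lean document; each statement's English description precedes it below -/
import Mathlib

section
/- Let Ω ⊂ ℝ^d be a compact set and let μ be a finite Borel measure on Ω. For every n ∈ ℕ there exist s ≤ C(n+d, d) points x(1), …, x(s) ∈ Ω and positive weights γ₁, …, γ_s > 0 such that ∫_Ω x^α dμ(x) = Σ_{j=1}^s γ_j · x(j)^α for every multi-index α ∈ ℕ^d with |α| ≤ n; equivalently, ∫_Ω p dμ = Σ_{j=1}^s γ_j p(x(j)) for every polynomial p ∈ ℝ[x₁,…,x_d] of total degree at most n. -/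
open MeasureTheory

section Aux

/-- Multi-indices of degree at most `n` correspond to multi-indices in one more
variable of degree exactly `n`. -/
def tchakaloffIdxEquiv (d n : ℕ) :
    {α : Fin d → ℕ // ∑ i, α i ≤ n} ≃ {P : Fin (d + 1) → ℕ // ∑ i, P i = n} where
  toFun α := ⟨Fin.cons (n - ∑ i, α.1 i) α.1, by
    rw [Fin.sum_cons]; exact Nat.sub_add_cancel α.2⟩
  invFun P := ⟨fun i => P.1 i.succ, by
    show ∑ i : Fin d, P.1 i.succ ≤ n
    have := P.2; rw [Fin.sum_univ_succ] at this; omega⟩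
  left_inv α := by
    ext i
    simp
  right_inv P := by
    ext i
    refine Fin.cases ?_ (fun j => ?_) i
    · have := P.2; rw [Fin.sum_univ_succ] at this; simp; omega
    · simp

noncomputable instance tchakaloffIdxFintype (d n : ℕ) :
    Fintype {α : Fin d → ℕ // ∑ i, α i ≤ n} :=
  Fintype.ofEquiv _ ((Sym.equivNatSumOfFintype (Fin (d + 1)) n).trans
    (tchakaloffIdxEquiv d n).symm)

lemma tchakaloff_card (d n : ℕ) :
    Fintype.card {α : Fin d → ℕ // ∑ i, α i ≤ n} = (n + d).choose d := by
  rw [Fintype.card_congr ((tchakaloffIdxEquiv d n).trans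
    (Sym.equivNatSumOfFintype (Fin (d + 1)) n).symm),
    Sym.card_sym_eq_choose]
  have h1 : Fintype.card (Fin (d + 1)) + n - 1 = d + n := by simp
  rw [h1]
  rw [show d + n = n + d from add_comm d n, Nat.choose_symm_add]

private lemma tchakaloff_pad_sum {M : Type*} [AddCommMonoid M] {k N : ℕ} (hkN : k ≤ N)
    (g : ℕ → M) (hg : ∀ j, k ≤ j → g j = 0) :
    ∑ j : Fin N, g ↑j = ∑ j : Fin k, g ↑j := by
  rw [Fin.sum_univ_eq_sum_range, Fin.sum_univ_eq_sum_range]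
  exact (Finset.sum_subset (Finset.range_subset_range.2 hkN)
    (fun i _ hi => hg i (by simpa using hi))).symm

/-- In a finite-dimensional real normed space, the convex hull of a compact set
is compact. -/
lemma tchakaloff_isCompact_convexHull {E : Type*} [NormedAddCommGroup E] [NormedSpace ℝ E]
    [FiniteDimensional ℝ E] {s : Set E} (hs : IsCompact s) :
    IsCompact (convexHull ℝ s) := by
  rcases s.eq_empty_or_nonempty with rfl | ⟨y₀, hy₀⟩
  · simp only [convexHull_empty]; exact isCompact_empty
  set N := Module.finrank ℝ E + 1 with hN
  set T : Set ((Fin N → ℝ) × (Fin N → E)) :=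
    (stdSimplex ℝ (Fin N)) ×ˢ (Set.univ.pi fun _ => s) with hT
  have hTc : IsCompact T := (isCompact_stdSimplex (𝕜 := ℝ) (ι := Fin N)).prod (isCompact_univ_pi fun _ => hs)
  set φ : (Fin N → ℝ) × (Fin N → E) → E := fun p => ∑ j, p.1 j • p.2 j with hφ
  have hφc : Continuous φ := continuous_finset_sum _ fun j _ =>
    ((continuous_apply j).comp continuous_fst).smul ((continuous_apply j).comp continuous_snd)
  have key : convexHull ℝ s = φ '' T := by
    apply Set.Subset.antisymm
    · intro x hx
      obtain ⟨ι, hι, z, w, hzs, hai, hwpos, hw1, hrep⟩ :=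
        eq_pos_convex_span_of_mem_convexHull hx
      letI := hι
      have hcard : Fintype.card ι ≤ N :=
        hai.card_le_finrank_succ.trans (Nat.add_le_add_right (Submodule.finrank_le _) 1)
      set k := Fintype.card ι with hk
      set e : Fin k ≃ ι := (Fintype.equivFin ι).symm with he
      set wn : ℕ → ℝ := fun j => if h : j < k then w (e ⟨j, h⟩) else 0 with hwn
      set zn : ℕ → E := fun j => if h : j < k then z (e ⟨j, h⟩) else y₀ with hzn
      have hwnj : ∀ j : Fin k, wn ↑j = w (e j) := fun j => dif_pos j.isLt
      have hznj : ∀ j : Fin k, zn ↑j = z (e j) := fun j => dif_pos j.isLt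
      refine ⟨(fun j : Fin N => wn ↑j, fun j : Fin N => zn ↑j), ⟨⟨?_, ?_⟩, ?_⟩, ?_⟩
      · intro j
        by_cases h : (j : ℕ) < k
        · simp only [hwn, dif_pos h]; exact (hwpos _).le
        · simp only [hwn, dif_neg h]; exact le_rfl
      · rw [tchakaloff_pad_sum hcard wn (fun j hj => by simp [hwn, Nat.not_lt.2 hj])]
        rw [show ∑ j : Fin k, wn ↑j = ∑ j : Fin k, w (e j) from
          Finset.sum_congr rfl fun j _ => hwnj j]
        rw [Equiv.sum_comp e w]; exact hw1
      · intro j _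
        by_cases h : (j : ℕ) < k
        · simp only [hzn, dif_pos h]; exact hzs (Set.mem_range_self _)
        · simp only [hzn, dif_neg h]; exact hy₀
      · show ∑ j : Fin N, wn ↑j • zn ↑j = x
        rw [tchakaloff_pad_sum hcard (fun j => wn j • zn j)
          (fun j hj => by simp [hwn, Nat.not_lt.2 hj])]
        rw [show ∑ j : Fin k, wn ↑j • zn ↑j = ∑ j : Fin k, w (e j) • z (e j) from
          Finset.sum_congr rfl fun j _ => by rw [hwnj j, hznj j]]
        rw [Equiv.sum_comp e (fun i => w i • z i)]; exact hrep
    · rintro _ ⟨⟨w, z⟩, ⟨hw, hz⟩, rfl⟩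
      exact Convex.sum_mem (convex_convexHull ℝ s) (fun j _ => hw.1 j) hw.2
        (fun j _ => subset_convexHull ℝ s (hz j (Set.mem_univ j)))
  rw [key]
  exact hTc.image hφc

end Aux

/-- Tchakaloff's theorem: for a compact `Ω ⊆ ℝ^d` and a finite Borel measure
`μ` on `Ω`, and any `n`, there exist `s ≤ C(n+d, d)` points of `Ω` and positive
weights matching all moments of `μ` up to degree `n`. -/
theorem tchakaloff_theorem
    {d : ℕ} (Ω : Set (EuclideanSpace ℝ (Fin d))) (hΩc : IsCompact Ω)
    (μ : Measure (EuclideanSpace ℝ (Fin d))) [IsFiniteMeasure μ]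
    (n : ℕ) :
    ∃ (s : ℕ), s ≤ (n + d).choose d ∧
      ∃ (x : Fin s → EuclideanSpace ℝ (Fin d)) (γ : Fin s → ℝ),
        (∀ j, x j ∈ Ω) ∧ (∀ j, 0 < γ j) ∧
        ∀ α : Fin d → ℕ, (∑ i, α i) ≤ n →
          ∫ y in Ω, (∏ i, y i ^ α i) ∂μ = ∑ j, γ j * ∏ i, (x j i) ^ α i := by
  classical
  by_cases hμΩ : μ Ω = 0
  · refine ⟨0, Nat.zero_le _, Fin.elim0, Fin.elim0, fun j => j.elim0, fun j => j.elim0, ?_⟩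
    intro α _
    rw [Measure.restrict_eq_zero.2 hμΩ]
    simp
  · set A := {α : Fin d → ℕ // ∑ i, α i ≤ n} with hA
    set E := A → ℝ with hE
    set v : EuclideanSpace ℝ (Fin d) → E := fun y a => ∏ i, y i ^ a.1 i with hv
    have hvc : Continuous v := by
      refine continuous_pi fun a => continuous_finset_prod _ fun i _ => ?_
      exact ((EuclideanSpace.proj (𝕜 := ℝ) i).continuous).pow _
    have hΩm : MeasurableSet Ω := hΩc.isClosed.measurableSet
    have hvi : IntegrableOn v Ω μ := hvc.continuousOn.integrableOn_compact hΩc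
    set m : E := ∫ y in Ω, v y ∂μ with hm
    have hmcoord : ∀ a : A, m a = ∫ y in Ω, v y a ∂μ := by
      intro a
      exact ((ContinuousLinearMap.proj (R := ℝ) (φ := fun _ : A => ℝ) a).integral_comp_comm
        hvi).symm
    set M : ℝ := (μ Ω).toReal with hMdef
    have hM : 0 < M := ENNReal.toReal_pos hμΩ (measure_ne_top μ Ω)
    set V : Set E := v '' Ω with hV
    have hVc : IsCompact V := hΩc.image hvc
    have hVhullc : IsClosed (convexHull ℝ V) := (tchakaloff_isCompact_convexHull hVc).isClosed
    -- the normalized moment vector lies in the convex hull of V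
    have hmem : M⁻¹ • m ∈ convexHull ℝ V := by
      by_contra hc
      obtain ⟨f, u, hfu, hum⟩ :=
        geometric_hahn_banach_closed_point (convex_convexHull ℝ V) hVhullc hc
      have hint2 : IntegrableOn (fun y => f (v y)) Ω μ := f.integrable_comp hvi
      have hb : ∫ y in Ω, f (v y) ∂μ ≤ ∫ (_ : EuclideanSpace ℝ (Fin d)) in Ω, u ∂μ := by
        refine setIntegral_mono_on hint2 (integrable_const u).integrableOn hΩm ?_
        intro y hy
        exact (hfu _ (subset_convexHull ℝ V ⟨y, hy, rfl⟩)).le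
      rw [setIntegral_const, smul_eq_mul] at hb
      have hfm : ∫ y in Ω, f (v y) ∂μ = f m := f.integral_comp_comm hvi
      rw [hfm] at hb
      have hcle : f (M⁻¹ • m) ≤ u := by
        have h1 : f (M⁻¹ • m) = M⁻¹ * f m := by rw [f.map_smul, smul_eq_mul]
        have h2 : M⁻¹ * f m ≤ M⁻¹ * (M * u) :=
          mul_le_mul_of_nonneg_left hb (inv_nonneg.2 hM.le)
        rw [← mul_assoc, inv_mul_cancel₀ hM.ne', one_mul] at h2
        rw [h1]; exact h2
      linarith [hum]
    obtain ⟨ι, hι, z, w, hzV, hai, hwpos, hw1, hrep⟩ :=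
      eq_pos_convex_span_of_mem_convexHull hmem
    letI := hι
    -- cardinality bound: points lie on the hyperplane `p a0 = 1`
    set a0 : A := ⟨fun _ => 0, by simp⟩ with ha0
    have hplane : ∀ p ∈ V, p a0 = 1 := by
      rintro _ ⟨y, _, rfl⟩
      show ∏ i : Fin d, y i ^ (0 : ℕ) = 1
      simp
    set ℓ : E →ₗ[ℝ] ℝ := LinearMap.proj a0 with hℓ
    have hker : vectorSpan ℝ (Set.range z) ≤ LinearMap.ker ℓ := by
      rw [vectorSpan_def, Submodule.span_le]
      intro x hx
      obtain ⟨p, hp, q, hq, rfl⟩ := Set.mem_vsub.1 hx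
      obtain ⟨i, rfl⟩ := hp
      obtain ⟨j, rfl⟩ := hq
      have hpi : z i a0 = 1 := hplane _ (hzV (Set.mem_range_self i))
      have hqj : z j a0 = 1 := hplane _ (hzV (Set.mem_range_self j))
      simp only [SetLike.mem_coe, LinearMap.mem_ker, hℓ]
      show (z i - z j) a0 = 0
      rw [Pi.sub_apply, hpi, hqj, sub_self]
    have hsurj : Function.Surjective ℓ := fun c => ⟨fun _ => c, rfl⟩
    have hrank : Module.finrank ℝ (LinearMap.ker ℓ) + 1 = Module.finrank ℝ E := by
      have h1 := LinearMap.finrank_range_add_finrank_ker ℓ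
      rw [LinearMap.range_eq_top.2 hsurj, finrank_top, Module.finrank_self] at h1
      omega
    have hcard : Fintype.card ι ≤ (n + d).choose d := by
      have h1 := hai.card_le_finrank_succ
      have h2 : Module.finrank ℝ (vectorSpan ℝ (Set.range z)) ≤
          Module.finrank ℝ (LinearMap.ker ℓ) := Submodule.finrank_mono hker
      have h3 : Module.finrank ℝ E = Fintype.card A :=
        Module.finrank_fintype_fun_eq_card ℝ
      calc Fintype.card ι ≤ Module.finrank ℝ (vectorSpan ℝ (Set.range z)) + 1 := h1
        _ ≤ Module.finrank ℝ (LinearMap.ker ℓ) + 1 := Nat.add_le_add_right h2 1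
        _ = Module.finrank ℝ E := hrank
        _ = Fintype.card A := h3
        _ = (n + d).choose d := tchakaloff_card d n
    -- choose points of Ω representing the z i
    have hzmem : ∀ i : ι, ∃ y, y ∈ Ω ∧ v y = z i := fun i => hzV (Set.mem_range_self i)
    choose xf hxf hvxf using hzmem
    set e : Fin (Fintype.card ι) ≃ ι := (Fintype.equivFin ι).symm with he
    refine ⟨Fintype.card ι, hcard, fun j => xf (e j), fun j => M * w (e j),
      fun j => hxf (e j), fun j => mul_pos hM (hwpos (e j)), ?_⟩
    intro α hα
    set a : A := ⟨α, hα⟩ with haa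
    have hmrep : m = ∑ i, (M * w i) • z i := by
      have h0 : M • (M⁻¹ • m) = M • ∑ i, w i • z i := congrArg _ hrep.symm
      rw [smul_inv_smul₀ (ne_of_gt hM)] at h0
      rw [h0, Finset.smul_sum]
      exact Finset.sum_congr rfl fun i _ => smul_smul M (w i) (z i)
    have hLHS : ∫ y in Ω, (∏ i, y i ^ α i) ∂μ = m a := (hmcoord a).symm
    rw [hLHS]
    have hma : m a = ∑ i, (M * w i) * z i a := by
      rw [hmrep]
      rw [Finset.sum_apply]
      exact Finset.sum_congr rfl fun i _ => rfl
    rw [hma, ← Equiv.sum_comp e (fun i => (M * w i) * z i a)]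
    refine Finset.sum_congr rfl fun j _ => ?_
    rw [← hvxf (e j)]
end

section
/- Let (Ω, μ) be a measure space with μ a finite measure satisfying μ(Ω) > 0, and let f : Ω → ℝ be integrable with respect to μ. Then there exist points x₀, x₁ ∈ Ω and λ ∈ [0, 1] such that ∫_Ω f dμ = μ(Ω) · (λ · f(x₀) + (1 − λ) · f(x₁)). In other words, the μ-average (1/μ(Ω)) ∫_Ω f dμ is a convex combination of at most two values of f. -/
open MeasureTheory

/-- Extension of the Mean Value Theorem (main result): for a finite measure `μ`
of positive total mass on an arbitrary measure space `Ω` and a `μ`-integrable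
`f : Ω → ℝ`, there exist `x₀, x₁ ∈ Ω` and `λ ∈ [0,1]` with
`∫ f dμ = μ(Ω) * (λ f(x₀) + (1-λ) f(x₁))`. -/
theorem extended_mean_value_theorem
    {Ω : Type*} [MeasurableSpace Ω] (μ : Measure Ω) [IsFiniteMeasure μ]
    (hμ : 0 < μ Set.univ) (f : Ω → ℝ) (hf : Integrable f μ) :
    ∃ (x₀ x₁ : Ω) (l : ℝ), l ∈ Set.Icc (0 : ℝ) 1 ∧
      ∫ ω, f ω ∂μ = (μ Set.univ).toReal * (l * f x₀ + (1 - l) * f x₁) := by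
  have hμ0 : μ ≠ 0 := by
    intro h
    simp [h] at hμ
  obtain ⟨x₀, hx₀⟩ := exists_le_average hμ0 hf
  obtain ⟨x₁, hx₁⟩ := exists_average_le hμ0 hf
  set A := ⨍ a, f a ∂μ with hA
  have hμt : (μ Set.univ).toReal ≠ 0 :=
    ENNReal.toReal_ne_zero.2 ⟨hμ.ne', measure_ne_top μ _⟩
  have hint : ∫ ω, f ω ∂μ = (μ Set.univ).toReal * A := by
    rw [hA, average_eq, smul_eq_mul]
    field_simp
    rw [Measure.real, mul_div_assoc, div_self hμt, mul_one]
  by_cases h : f x₀ = f x₁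
  · refine ⟨x₀, x₁, 0, ⟨le_refl _, zero_le_one⟩, ?_⟩
    have : A = f x₁ := le_antisymm hx₁ (h ▸ hx₀)
    rw [hint, this]; ring
  · have hlt : f x₀ < f x₁ := lt_of_le_of_ne (hx₀.trans hx₁) h
    have hd : f x₁ - f x₀ > 0 := by linarith
    refine ⟨x₀, x₁, (f x₁ - A) / (f x₁ - f x₀), ⟨div_nonneg (by linarith) hd.le, ?_⟩, ?_⟩
    · rw [div_le_one hd]; linarith
    · rw [hint]
      congr 1
      field_simp
      ring
end
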